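/- With the notation of the model, for all η ∈ V and n ∈ ℕ one has (d∘F∘b − q⁻¹·b∘F∘d) η_n = −λ q^{n+1} (w⁻¹Tη)_n; equivalently, d∘F∘b − q⁻¹·b∘F∘d = λ·b∘T̂, where T̂ denotes the diagonal lift of T to W given by T̂ η_n := (Tη)_n. -/

import Mathlib

/-- `lam q n = λ_n = (1 - q^(2n))^(1/2)`, so `lam q 0 = 0`. -/
noncomputable def lam (q : ℝ) (n : ℕ) : ℝ := Real.sqrt (1 - q ^ (2 * n))

/-- The formula `Ω₀ = λ π(b) T` of Theorem 4, equation (6.7), where `Ω₀ = π(d)Fπ(b) − q⁻¹π(b)Fπ(d)` and `That` is the diagonal lift of `T`. -/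
theorem omega0_formula
    (q : ℝ) (hq0 : 0 < q) (hq1 : q < 1)
    (V : Type*) [AddCommGroup V] [Module ℂ V]
    (w : V ≃ₗ[ℂ] V) (T S R : V →ₗ[ℂ] V)
    (hT : ∀ η : V, w (T (w.symm η)) = (q : ℂ) • T η)
    (hS : ∀ η : V, w (S (w.symm η)) = (q : ℂ) • S η)
    (hR : ∀ η : V, w (w (R (w.symm (w.symm η)))) + ((q ^ 2 : ℝ) : ℂ) • R η
            = ((1 + q ^ 2 : ℝ) : ℂ) • w (R (w.symm η)))
    (a b c d F : (ℕ →₀ V) →ₗ[ℂ] (ℕ →₀ V))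
    (ha : ∀ (η : V) (n : ℕ),
      a (Finsupp.single n η) = (lam q n : ℂ) • Finsupp.single (n - 1) η)
    (hb : ∀ (η : V) (n : ℕ),
      b (Finsupp.single n η) = -(((q ^ (n + 1) : ℝ)) : ℂ) • Finsupp.single n (w.symm η))
    (hc : ∀ (η : V) (n : ℕ),
      c (Finsupp.single n η) = ((q ^ n : ℝ) : ℂ) • Finsupp.single n (w η))
    (hd : ∀ (η : V) (n : ℕ),
      d (Finsupp.single n η) = (lam q (n + 1) : ℂ) • Finsupp.single (n + 1) η)
    (hF : ∀ (η : V) (n : ℕ),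
      F (Finsupp.single n η) = (lam q n : ℂ) • Finsupp.single (n - 1) (T η)
        + Finsupp.single n ((w ^ n) (R ((w.symm ^ n) η)))
        + (lam q (n + 1) : ℂ) • Finsupp.single (n + 1) (S η))
    (That : (ℕ →₀ V) →ₗ[ℂ] (ℕ →₀ V))
    (hThat : ∀ (η : V) (n : ℕ), That (Finsupp.single n η) = Finsupp.single n (T η))
    :
    (∀ (η : V) (n : ℕ),
        (d ∘ₗ F ∘ₗ b - ((q⁻¹ : ℝ) : ℂ) • (b ∘ₗ F ∘ₗ d)) (Finsupp.single n η)
          = -(((q - q⁻¹) * q ^ (n + 1) : ℝ) : ℂ) • Finsupp.single n (w.symm (T η)))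
    ∧ d ∘ₗ F ∘ₗ b - ((q⁻¹ : ℝ) : ℂ) • (b ∘ₗ F ∘ₗ d)
        = ((q - q⁻¹ : ℝ) : ℂ) • (b ∘ₗ That) := by
  have hT' : ∀ η : V, T (w.symm η) = (q:ℂ) • w.symm (T η) := by
    intro η
    have h := congrArg w.symm (hT η)
    rw [w.symm_apply_apply, map_smul] at h; exact h
  have hS' : ∀ η : V, S (w.symm η) = (q:ℂ) • w.symm (S η) := by
    intro η
    have h := congrArg w.symm (hS η)
    rw [w.symm_apply_apply, map_smul] at h; exact h
  have hpow1 : ∀ (m : ℕ) (x : V), w.symm ((w ^ (m+1)) x) = (w ^ m) x := by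
    intro m x
    rw [pow_succ', show (w * w^m) x = w ((w^m) x) from rfl, LinearEquiv.symm_apply_apply]
  have hpow2 : ∀ (m : ℕ) (x : V), (w.symm ^ m) (w.symm x) = (w.symm ^ (m+1)) x := by
    intro m x
    rw [pow_succ, show (w.symm ^ m * w.symm) x = (w.symm ^ m) (w.symm x) from rfl]
  have hlamC : ∀ m : ℕ, (lam q m : ℂ) ^ 2 = 1 - (q:ℂ) ^ (2*m) := by
    intro m
    have h1 : q ^ (2*m) ≤ 1 := pow_le_one₀ hq0.le hq1.le
    have : lam q m ^ 2 = 1 - q ^ (2*m) := by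
      rw [lam, Real.sq_sqrt (by linarith)]
    exact_mod_cast congrArg (fun x : ℝ => (x:ℂ)) this
  have hqC : (q:ℂ) ≠ 0 := by exact_mod_cast hq0.ne'
  have key : ∀ (η : V) (n : ℕ),
      (d ∘ₗ F ∘ₗ b - ((q⁻¹ : ℝ) : ℂ) • (b ∘ₗ F ∘ₗ d)) (Finsupp.single n η)
        = -(((q - q⁻¹) * q ^ (n + 1) : ℝ) : ℂ) • Finsupp.single n (w.symm (T η)) := by
    intro η n
    simp only [LinearMap.sub_apply, LinearMap.smul_apply, LinearMap.comp_apply, hb, hd,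
      map_smul, map_add, map_neg, hF, hT', hS', hpow1, hpow2, Finsupp.smul_single, smul_smul,
      Nat.add_sub_cancel]
    simp only [← Finsupp.smul_single]
    cases n with
    | zero =>
      simp only [show lam q 0 = 0 from by simp [lam], Complex.ofReal_zero, zero_smul, mul_zero,
        zero_mul, smul_zero, add_zero, zero_add, Nat.zero_sub]
      match_scalars
      · push_cast
        field_simp
        first | ring1 | (linear_combination hlamC 1) | (linear_combination -hlamC 1)
      · push_cast
        field_simp
        first | ring1 | (linear_combination hlamC 1) | (linear_combination -hlamC 1)
      · push_cast
        field_simp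
        first | ring1 | (linear_combination hlamC 1) | (linear_combination -hlamC 1)
    | succ m =>
      simp only [Nat.succ_sub_one]
      match_scalars
      · push_cast
        field_simp
        first | ring1 | (linear_combination (-((q:ℂ)^4*(q:ℂ)^m)) * hlamC (m+1) + ((q:ℂ)^2*(q:ℂ)^m) * hlamC (m+2)) | (linear_combination ((q:ℂ)^4*(q:ℂ)^m) * hlamC (m+1) - ((q:ℂ)^2*(q:ℂ)^m) * hlamC (m+2)) | (linear_combination (-((q:ℂ)^4*(q:ℂ)^m)) * hlamC (1+m) + ((q:ℂ)^2*(q:ℂ)^m) * hlamC (2+m)) | (linear_combination ((q:ℂ)^4*(q:ℂ)^m) * hlamC (1+m) - ((q:ℂ)^2*(q:ℂ)^m) * hlamC (2+m)) | (linear_combination hlamC (m+1+1) - (q:ℂ)^2 * hlamC (m+1))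
      · push_cast
        field_simp
        first | ring1 | (linear_combination (-((q:ℂ)^4*(q:ℂ)^m)) * hlamC (m+1) + ((q:ℂ)^2*(q:ℂ)^m) * hlamC (m+2)) | (linear_combination ((q:ℂ)^4*(q:ℂ)^m) * hlamC (m+1) - ((q:ℂ)^2*(q:ℂ)^m) * hlamC (m+2)) | (linear_combination (-((q:ℂ)^4*(q:ℂ)^m)) * hlamC (1+m) + ((q:ℂ)^2*(q:ℂ)^m) * hlamC (2+m)) | (linear_combination ((q:ℂ)^4*(q:ℂ)^m) * hlamC (1+m) - ((q:ℂ)^2*(q:ℂ)^m) * hlamC (2+m))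
      · push_cast
        field_simp
        first | ring1 | (linear_combination (-((q:ℂ)^4*(q:ℂ)^m)) * hlamC (m+1) + ((q:ℂ)^2*(q:ℂ)^m) * hlamC (m+2)) | (linear_combination ((q:ℂ)^4*(q:ℂ)^m) * hlamC (m+1) - ((q:ℂ)^2*(q:ℂ)^m) * hlamC (m+2)) | (linear_combination (-((q:ℂ)^4*(q:ℂ)^m)) * hlamC (1+m) + ((q:ℂ)^2*(q:ℂ)^m) * hlamC (2+m)) | (linear_combination ((q:ℂ)^4*(q:ℂ)^m) * hlamC (1+m) - ((q:ℂ)^2*(q:ℂ)^m) * hlamC (2+m))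
  refine ⟨key, ?_⟩
  refine Finsupp.lhom_ext fun n η => ?_
  rw [key η n]
  simp only [LinearMap.smul_apply, LinearMap.comp_apply, hThat, hb, smul_smul,
    Finsupp.smul_single]
  simp only [← Finsupp.smul_single]
  match_scalars
  push_cast
  ring
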